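/- Let V be an (N+1)-dimensional ℂ-linear subspace of ℂ[x] with basis f_1, …, f_{N+1}. Then the set of degrees of nonzero elements of V has exactly N+1 elements d_0 < d_1 < … < d_N, and the Wronskian of f_1, …, f_{N+1} is a nonzero polynomial of degree d_0 + d_1 + ⋯ + d_N − N(N+1)/2. -/

import Mathlib

open Polynomial

lemma linIndep_of_natDegree_injOn {ι : Type*} (p : ι → Polynomial ℂ) (h0 : ∀ i, p i ≠ 0)
    (hinj : Function.Injective fun i => (p i).natDegree) : LinearIndependent ℂ p := by
  rw [linearIndependent_iff']
  intro s c hsum i hi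
  by_contra hci
  have hne : (s.filter fun i => c i ≠ 0).Nonempty := ⟨i, Finset.mem_filter.2 ⟨hi, hci⟩⟩
  obtain ⟨i0, hi0, hmax⟩ := Finset.exists_max_image _ (fun i => (p i).natDegree) hne
  rw [Finset.mem_filter] at hi0
  have hcoeff : (∑ j ∈ s, c j • p j).coeff ((p i0).natDegree) = c i0 * (p i0).leadingCoeff := by
    rw [Polynomial.finset_sum_coeff]
    rw [Finset.sum_eq_single i0]
    · rw [Polynomial.coeff_smul, Polynomial.coeff_natDegree, smul_eq_mul]
    · intro j hj hji
      by_cases hcj : c j = 0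
      · simp [hcj]
      · have : (p j).natDegree ≤ (p i0).natDegree := hmax j (Finset.mem_filter.2 ⟨hj, hcj⟩)
        have hne' : (p j).natDegree ≠ (p i0).natDegree := fun h => hji (hinj h)
        have : (p j).coeff ((p i0).natDegree) = 0 :=
          Polynomial.coeff_eq_zero_of_natDegree_lt (lt_of_le_of_ne this hne')
        simp [this]
    · intro h; exact absurd hi0.1 h
  rw [hsum, Polynomial.coeff_zero] at hcoeff
  have := mul_eq_zero.1 hcoeff.symm
  rcases this with h | h
  · exact hi0.2 h
  · exact h0 i0 (Polynomial.leadingCoeff_eq_zero.1 h)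

lemma coeff_prod_sum {ι : Type*} (s : Finset ι) (q : ι → Polynomial ℂ) (e : ι → ℕ)
    (h : ∀ i ∈ s, (q i).natDegree ≤ e i) :
    (∏ i ∈ s, q i).coeff (∑ i ∈ s, e i) = ∏ i ∈ s, (q i).coeff (e i) := by
  induction s using Finset.cons_induction with
  | empty => simp
  | cons a s ha ih =>
    rw [Finset.prod_cons, Finset.sum_cons, Finset.prod_cons,
      Polynomial.coeff_mul_add_eq_of_natDegree_le (h a (Finset.mem_cons_self a s))
        ((Polynomial.natDegree_prod_le s q).trans
          (Finset.sum_le_sum fun i hi => h i (Finset.mem_cons_of_mem hi))),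
      ih fun i hi => h i (Finset.mem_cons_of_mem hi)]

lemma strictMono_fin_le {n : ℕ} {d : Fin n → ℕ} (hmono : StrictMono d) (i : Fin n) :
    (i : ℕ) ≤ d i := by
  have : ∀ k : ℕ, ∀ i : Fin n, (i : ℕ) = k → k ≤ d i := by
    intro k
    induction k with
    | zero => intro i _; exact Nat.zero_le _
    | succ k ih =>
      intro i hik
      have hk : k < n := by omega
      have hlt : (⟨k, hk⟩ : Fin n) < i := by
        simp [Fin.lt_def, hik]
      have := ih ⟨k, hk⟩ rfl
      have := hmono hlt
      omega
  exact this _ i rfl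

/-- The Wronskian of `n` polynomials: the determinant of the `n × n` matrix whose
`(i,j)` entry is the `j`-th derivative of `f i` (`0 ≤ j ≤ n-1`). -/
noncomputable def polyWronskian {n : ℕ} (f : Fin n → Polynomial ℂ) : Polynomial ℂ :=
  Matrix.det (Matrix.of fun i j : Fin n => Polynomial.derivative^[(j : ℕ)] (f i))


set_option maxHeartbeats 2000000 in
lemma wronskian_echelon {n : ℕ} (g : Fin n → Polynomial ℂ) (d : Fin n → ℕ)
    (h0 : ∀ i, g i ≠ 0) (hdeg : ∀ i, (g i).natDegree = d i) (hmono : StrictMono d) :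
    polyWronskian g ≠ 0 ∧
      (polyWronskian g).natDegree = (∑ i, d i) - ∑ i : Fin n, (i : ℕ) := by
  classical
  set Dtot : ℕ := (∑ i, d i) - ∑ i : Fin n, (i : ℕ) with hDtot
  have hsum_le : (∑ i : Fin n, (i : ℕ)) ≤ ∑ i, d i :=
    Finset.sum_le_sum fun i _ => strictMono_fin_le hmono i
  -- the leading coefficient matrix
  set L : Matrix (Fin n) (Fin n) ℂ :=
    Matrix.of (fun i j : Fin n => (g i).leadingCoeff * ((d i).descFactorial (j : ℕ) : ℂ)) with hL
  have hdetL : L.det ≠ 0 := by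
    have hEq : L = Matrix.of fun i j : Fin n =>
        (g i).leadingCoeff * ((descPochhammer ℂ (j : ℕ)).eval ((d i : ℂ))) := by
      ext i j
      rw [hL, Matrix.of_apply, Matrix.of_apply, descPochhammer_eval_eq_descFactorial]
    rw [hEq]
    rw [show (Matrix.of fun i j : Fin n =>
        (g i).leadingCoeff * ((descPochhammer ℂ (j : ℕ)).eval ((d i : ℂ)))) =
        Matrix.of fun i j : Fin n => (g i).leadingCoeff *
          (Matrix.of fun i j : Fin n => (descPochhammer ℂ (j : ℕ)).eval ((d i : ℂ))) i j from rfl,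
      Matrix.det_mul_column (fun i : Fin n => (g i).leadingCoeff)
      (Matrix.of fun i j : Fin n => (descPochhammer ℂ (j : ℕ)).eval ((d i : ℂ)))]
    apply mul_ne_zero
    · exact Finset.prod_ne_zero_iff.2 fun i _ => Polynomial.leadingCoeff_ne_zero.2 (h0 i)
    · rw [← Matrix.det_eval_matrixOfPolynomials_eq_det_vandermonde (fun i : Fin n => (d i : ℂ))
        (fun j => descPochhammer ℂ (j : ℕ))
        (fun j => descPochhammer_natDegree ℂ (j : ℕ))
        (fun j => monic_descPochhammer ℂ (j : ℕ))]
      rw [Matrix.det_vandermonde_ne_zero_iff]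
      exact fun a b hab => hmono.injective (Nat.cast_injective hab)
  -- per-permutation analysis
  have key : ∀ σ : Equiv.Perm (Fin n),
      (∏ i : Fin n, Polynomial.derivative^[(i : ℕ)] (g (σ i))).natDegree ≤ Dtot ∧
      (∏ i : Fin n, Polynomial.derivative^[(i : ℕ)] (g (σ i))).coeff Dtot = ∏ i, L (σ i) i := by
    intro σ
    by_cases hσ : ∀ i : Fin n, (i : ℕ) ≤ d (σ i)
    · have hq : ∀ i : Fin n, (Polynomial.derivative^[(i : ℕ)] (g (σ i))).natDegree ≤
          d (σ i) - (i : ℕ) := by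
        intro i
        exact (Polynomial.natDegree_iterate_derivative _ _).trans (by rw [hdeg])
      have hesum : ∑ i : Fin n, (d (σ i) - (i : ℕ)) = Dtot := by
        rw [Finset.sum_tsub_distrib _ (fun i _ => hσ i), hDtot, Equiv.sum_comp σ d]
      constructor
      · exact (Polynomial.natDegree_prod_le _ _).trans
          (le_of_le_of_eq (Finset.sum_le_sum fun i _ => hq i) hesum)
      · rw [← hesum, coeff_prod_sum _ _ _ (fun i _ => hq i)]
        apply Finset.prod_congr rfl
        intro i _
        rw [Polynomial.coeff_iterate_derivative]
        have h1 : d (σ i) - (i : ℕ) + (i : ℕ) = d (σ i) := Nat.sub_add_cancel (hσ i)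
        rw [h1, hL, Matrix.of_apply, ← hdeg (σ i), Polynomial.coeff_natDegree,
          nsmul_eq_mul, hdeg (σ i), mul_comm]
    · push_neg at hσ
      obtain ⟨i0, hi0⟩ := hσ
      have hzero : Polynomial.derivative^[(i0 : ℕ)] (g (σ i0)) = 0 :=
        Polynomial.iterate_derivative_eq_zero (by rw [hdeg]; exact hi0)
      have hprod : (∏ i : Fin n, Polynomial.derivative^[(i : ℕ)] (g (σ i))) = 0 :=
        Finset.prod_eq_zero (Finset.mem_univ i0) hzero
      rw [hprod]
      refine ⟨by simp, ?_⟩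
      rw [Polynomial.coeff_zero]
      symm
      apply Finset.prod_eq_zero (Finset.mem_univ i0)
      rw [hL, Matrix.of_apply, Nat.descFactorial_eq_zero_iff_lt.2 hi0]
      simp
  have hW : polyWronskian g =
      ∑ σ : Equiv.Perm (Fin n), Equiv.Perm.sign σ •
        ∏ i : Fin n, Polynomial.derivative^[(i : ℕ)] (g (σ i)) := by
    rw [polyWronskian, Matrix.det_apply]
    simp only [Matrix.of_apply]
  have hcoeff : (polyWronskian g).coeff Dtot = L.det := by
    rw [hW, Polynomial.finset_sum_coeff, Matrix.det_apply]
    apply Finset.sum_congr rfl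
    intro σ _
    rw [Polynomial.coeff_smul, (key σ).2]
  have hne : (polyWronskian g).coeff Dtot ≠ 0 := hcoeff ▸ hdetL
  refine ⟨fun h => hne (by simp [h]), ?_⟩
  have hbound : ∀ σ : Equiv.Perm (Fin n),
      ((Equiv.Perm.sign σ) • ∏ i : Fin n, Polynomial.derivative^[(i : ℕ)] (g (σ i))).natDegree
        ≤ Dtot :=
    by
    intro σ
    have hle : ((Equiv.Perm.sign σ) •
        ∏ i : Fin n, Polynomial.derivative^[(i : ℕ)] (g (σ i))).natDegree
        ≤ (∏ i : Fin n, Polynomial.derivative^[(i : ℕ)] (g (σ i))).natDegree := by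
      rcases Int.units_eq_one_or (Equiv.Perm.sign σ) with h | h <;> rw [h]
      · simp
      · rw [show ((-1 : ℤˣ) • ∏ i : Fin n, Polynomial.derivative^[(i : ℕ)] (g (σ i)))
            = -∏ i : Fin n, Polynomial.derivative^[(i : ℕ)] (g (σ i)) by simp]
        simp
    exact hle.trans (key σ).1
  exact le_antisymm (hW ▸ Polynomial.natDegree_sum_le_of_forall_le _ _ fun σ _ => hbound σ)
    (Polynomial.le_natDegree_of_ne_zero hne)

lemma polyWronskian_transform {n : ℕ} (M : Matrix (Fin n) (Fin n) ℂ) (g : Fin n → Polynomial ℂ) :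
    polyWronskian (fun i => ∑ j, M i j • g j) = Polynomial.C M.det * polyWronskian g := by
  have hmat : (Matrix.of fun i j : Fin n => Polynomial.derivative^[(j : ℕ)] (∑ k, M i k • g k))
      = (M.map Polynomial.C) * (Matrix.of fun i j : Fin n =>
          Polynomial.derivative^[(j : ℕ)] (g i)) := by
    ext i j
    rw [Matrix.mul_apply, Matrix.of_apply]
    have : Polynomial.derivative^[(j : ℕ)] (∑ k, M i k • g k)
        = ∑ k, M i k • Polynomial.derivative^[(j : ℕ)] (g k) := by
      rw [← Module.End.pow_apply (Polynomial.derivative : Polynomial ℂ →ₗ[ℂ] Polynomial ℂ)]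
      simp only [map_sum, map_smul, Module.End.pow_apply]
    rw [this]
    congr 1
    apply Finset.sum_congr rfl
    intro k _
    rw [Matrix.map_apply, Matrix.of_apply, Polynomial.smul_eq_C_mul]
  rw [polyWronskian, polyWronskian, hmat, Matrix.det_mul, ← RingHom.mapMatrix_apply,
    ← RingHom.map_det]


set_option maxHeartbeats 1000000 in
/-- Let `V` be an `(N+1)`-dimensional subspace of `ℂ[x]` with basis `f_1, …, f_{N+1}`.
Then the set of degrees of nonzero elements of `V` has exactly `N+1` elements
`d_0 < d_1 < … < d_N`, and the Wronskian of `f_1, …, f_{N+1}` is a nonzero polynomial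
of degree `d_0 + d_1 + ⋯ + d_N − N(N+1)/2`. -/
theorem degree_wronskian (N : ℕ) (V : Submodule ℂ (Polynomial ℂ))
    (f : Fin (N + 1) → Polynomial ℂ)
    (hind : LinearIndependent ℂ f)
    (hspan : Submodule.span ℂ (Set.range f) = V) :
    ∃ dseq : Fin (N + 1) → ℕ, StrictMono dseq ∧
      {k : ℕ | ∃ g ∈ V, g ≠ 0 ∧ g.natDegree = k} = Set.range dseq ∧
      polyWronskian f ≠ 0 ∧
      (polyWronskian f).natDegree = (∑ i, dseq i) - N * (N + 1) / 2 := by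
  classical
  set S : Set ℕ := {k : ℕ | ∃ g ∈ V, g ≠ 0 ∧ g.natDegree = k} with hS
  have hfV : ∀ i, f i ∈ V := fun i => hspan ▸ Submodule.subset_span ⟨i, rfl⟩
  -- a degree bound on V
  set B : ℕ := Finset.univ.sup fun i => (f i).natDegree with hB
  have hbound : ∀ p ∈ V, p.natDegree ≤ B := by
    have hle : V ≤ Polynomial.degreeLE ℂ (B : WithBot ℕ) := by
      rw [← hspan, Submodule.span_le]
      rintro _ ⟨i, rfl⟩
      rw [SetLike.mem_coe, Polynomial.mem_degreeLE]
      refine (Polynomial.degree_le_natDegree).trans ?_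
      have : (f i).natDegree ≤ B := Finset.le_sup (f := fun i => (f i).natDegree)
        (Finset.mem_univ i)
      exact_mod_cast this
    intro p hp
    have := hle hp
    rw [Polynomial.mem_degreeLE] at this
    exact Polynomial.natDegree_le_iff_degree_le.2 this
  -- the choice function
  set g : ℕ → Polynomial ℂ := fun k => if h : k ∈ S then h.choose else 0 with hg
  have gprop : ∀ k ∈ S, g k ∈ V ∧ g k ≠ 0 ∧ (g k).natDegree = k := by
    intro k hk
    rw [hg]
    simp only [dif_pos hk]
    exact hk.choose_spec
  -- the finset of degrees
  set D : Finset ℕ := (Finset.range (B + 1)).filter (fun k => k ∈ S) with hD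
  have hDS : (↑D : Set ℕ) = S := by
    ext k
    simp only [hD, Finset.coe_filter, Finset.mem_range, Set.mem_setOf_eq, Set.mem_sep_iff]
    constructor
    · exact fun h => h.2
    · intro hk
      refine ⟨?_, hk⟩
      obtain ⟨p, hpV, hp0, hpd⟩ := hk
      exact Nat.lt_succ_of_le (hpd ▸ hbound p hpV)
  have hmemD : ∀ k ∈ D, k ∈ S := fun k hk => hDS ▸ hk
  -- V is finite dimensional of rank N+1
  haveI hfinV : FiniteDimensional ℂ V :=
    hspan ▸ FiniteDimensional.span_of_finite ℂ (Set.finite_range f)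
  set fV : Fin (N + 1) → V := fun i => ⟨f i, hfV i⟩ with hfVdef
  have hindV : LinearIndependent ℂ fV := by
    apply LinearIndependent.of_comp V.subtype
    convert hind
    exact funext fun _ => rfl
  have hspanV : Submodule.span ℂ (Set.range fV) = ⊤ := by
    apply Submodule.map_injective_of_injective V.injective_subtype
    rw [Submodule.map_span, Submodule.map_top, Submodule.range_subtype]
    rw [show V.subtype '' Set.range fV = Set.range f from ?_, hspan]
    rw [← Set.range_comp]
    rfl
  set bf : Module.Basis (Fin (N + 1)) ℂ V := Module.Basis.mk hindV hspanV.ge with hbf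
  have hrank : Module.finrank ℂ V = N + 1 := by
    rw [Module.finrank_eq_card_basis bf, Fintype.card_fin]
  -- |D| ≤ N + 1
  have hcard_le : D.card ≤ N + 1 := by
    set gD : {k // k ∈ D} → V :=
      fun k => ⟨g k, (gprop k (hmemD k k.2)).1⟩ with hgD
    have hindD : LinearIndependent ℂ gD := by
      apply LinearIndependent.of_comp V.subtype
      apply linIndep_of_natDegree_injOn
      · exact fun k => (gprop k (hmemD k k.2)).2.1
      · intro a b hab
        simp only [Function.comp] at hab
        have ha := (gprop a (hmemD a a.2)).2.2
        have hb := (gprop b (hmemD b b.2)).2.2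
        exact Subtype.ext (by rw [← ha, ← hb]; exact hab)
    have := hindD.fintype_card_le_finrank
    rwa [Fintype.card_coe, hrank] at this
  -- V is contained in the span of the chosen polynomials
  have hVle : V ≤ Submodule.span ℂ (g '' ↑D) := by
    have key : ∀ k : ℕ, ∀ p : Polynomial ℂ, p ∈ V → p.natDegree = k →
        p ∈ Submodule.span ℂ (g '' ↑D) := by
      intro k
      induction k using Nat.strong_induction_on with
      | _ k ih =>
        intro p hpV hpd
        by_cases hp0 : p = 0
        · rw [hp0]; exact Submodule.zero_mem _
        have hkS : k ∈ S := ⟨p, hpV, hp0, hpd⟩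
        have hkD : k ∈ D := by
          rw [hD, Finset.mem_filter, Finset.mem_range]
          exact ⟨Nat.lt_succ_of_le (hpd ▸ hbound p hpV), hkS⟩
        obtain ⟨hqV, hq0, hqd⟩ := gprop k hkS
        set c : ℂ := p.leadingCoeff / (g k).leadingCoeff with hc
        have hlcq : (g k).leadingCoeff ≠ 0 := Polynomial.leadingCoeff_ne_zero.2 hq0
        have hcne : c ≠ 0 := div_ne_zero (Polynomial.leadingCoeff_ne_zero.2 hp0) hlcq
        have hgkspan : g k ∈ Submodule.span ℂ (g '' ↑D) :=
          Submodule.subset_span ⟨k, hkD, rfl⟩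
        set r : Polynomial ℂ := p - c • g k with hr
        have hrV : r ∈ V := Submodule.sub_mem V hpV (Submodule.smul_mem V c hqV)
        have hdeg_lt : r.degree < p.degree := by
          rw [hr]
          apply Polynomial.degree_sub_lt
          · rw [Polynomial.smul_eq_C_mul, Polynomial.degree_C_mul hcne,
              Polynomial.degree_eq_natDegree hp0, Polynomial.degree_eq_natDegree hq0, hqd, hpd]
          · exact hp0
          · rw [Polynomial.smul_eq_C_mul, Polynomial.leadingCoeff_mul,
              Polynomial.leadingCoeff_C, hc, div_mul_cancel₀ _ hlcq]
        by_cases hr0 : r = 0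
        · have : p = c • g k := by rw [← sub_eq_zero]; exact hr ▸ hr0
          rw [this]
          exact Submodule.smul_mem _ c hgkspan
        · have hrd : r.natDegree < k := by
            rw [← hpd]
            exact Polynomial.natDegree_lt_natDegree hr0 hdeg_lt
          have hrspan := ih r.natDegree hrd r hrV rfl
          have : p = r + c • g k := by rw [hr]; ring
          rw [this]
          exact Submodule.add_mem _ hrspan (Submodule.smul_mem _ c hgkspan)
    exact fun p hp => key p.natDegree p hp rfl
  -- |D| ≥ N + 1
  have hcard_ge : N + 1 ≤ D.card := by
    haveI : FiniteDimensional ℂ (Submodule.span ℂ (g '' ↑D)) :=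
      FiniteDimensional.span_of_finite ℂ (D.finite_toSet.image g)
    have h1 : Module.finrank ℂ V ≤ Module.finrank ℂ (Submodule.span ℂ (g '' ↑D)) :=
      Submodule.finrank_mono hVle
    have h2 : Module.finrank ℂ (Submodule.span ℂ (g '' ↑D)) ≤ D.card := by
      rw [show g '' ↑D = ↑(D.image g) from (Finset.coe_image).symm]
      exact (finrank_span_finset_le_card (D.image g)).trans (Finset.card_image_le)
    rw [hrank] at h1
    omega
  have hcard : D.card = N + 1 := le_antisymm hcard_le hcard_ge
  -- enumeration of D
  set e := D.orderIsoOfFin hcard with he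
  set dseq : Fin (N + 1) → ℕ := fun i => (e i : ℕ) with hdseq
  have hmonod : StrictMono dseq := fun a b hab => Subtype.coe_lt_coe.2 (e.strictMono hab)
  have hrange : Set.range dseq = ↑D := by
    ext k
    constructor
    · rintro ⟨i, rfl⟩; exact (e i).2
    · intro hk
      exact ⟨e.symm ⟨k, hk⟩, by simp [hdseq]⟩
  -- the echelon family
  set gE : Fin (N + 1) → Polynomial ℂ := fun i => g (dseq i) with hgE
  have hdseqD : ∀ i, dseq i ∈ D := fun i => (e i).2
  have hEprop : ∀ i, gE i ∈ V ∧ gE i ≠ 0 ∧ (gE i).natDegree = dseq i :=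
    fun i => gprop _ (hmemD _ (hdseqD i))
  have hWgE := wronskian_echelon gE dseq (fun i => (hEprop i).2.1)
    (fun i => (hEprop i).2.2) hmonod
  have hindE : LinearIndependent ℂ gE := by
    apply linIndep_of_natDegree_injOn gE (fun i => (hEprop i).2.1)
    intro a b hab
    simp only at hab
    rw [(hEprop a).2.2, (hEprop b).2.2] at hab
    exact hmonod.injective hab
  have hrangeE : Set.range gE = g '' ↑D := by
    ext p
    constructor
    · rintro ⟨i, rfl⟩; exact ⟨dseq i, hdseqD i, rfl⟩
    · rintro ⟨k, hk, rfl⟩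
      exact ⟨e.symm ⟨k, hk⟩, by simp [hgE, hdseq]⟩
  have hspanE : Submodule.span ℂ (Set.range gE) = V := by
    apply le_antisymm
    · rw [Submodule.span_le]
      rintro _ ⟨i, rfl⟩
      exact (hEprop i).1
    · rw [hrangeE]
      exact hVle
  -- basis of V from the echelon family
  set gEV : Fin (N + 1) → V := fun i => ⟨gE i, (hEprop i).1⟩ with hgEV
  have hindEV : LinearIndependent ℂ gEV := by
    apply LinearIndependent.of_comp V.subtype
    convert hindE
    exact funext fun _ => rfl
  have hspanEV : Submodule.span ℂ (Set.range gEV) = ⊤ := by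
    apply Submodule.map_injective_of_injective V.injective_subtype
    rw [Submodule.map_span, Submodule.map_top, Submodule.range_subtype]
    rw [show V.subtype '' Set.range gEV = Set.range gE from ?_, hspanE]
    rw [← Set.range_comp]
    rfl
  set bg : Module.Basis (Fin (N + 1)) ℂ V := Module.Basis.mk hindEV hspanEV.ge with hbg
  set M : Matrix (Fin (N + 1)) (Fin (N + 1)) ℂ :=
    Matrix.of fun i j => bg.repr ⟨f i, hfV i⟩ j with hM
  have hf_eq : ∀ i, f i = ∑ j, M i j • gE j := by
    intro i
    have hsum := bg.sum_repr ⟨f i, hfV i⟩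
    calc f i = V.subtype (⟨f i, hfV i⟩ : V) := rfl
      _ = V.subtype (∑ j, bg.repr ⟨f i, hfV i⟩ j • bg j) := by rw [hsum]
      _ = ∑ j, M i j • gE j := by
          rw [map_sum]
          refine Finset.sum_congr rfl fun j _ => ?_
          rw [map_smul, hbg, Module.Basis.mk_apply]
          rfl
  have hdetM : M.det ≠ 0 := by
    have hMT : M = Matrix.transpose (bg.toMatrix bf) := by
      ext i j
      rw [Matrix.transpose_apply, Module.Basis.toMatrix_apply, hbf, Module.Basis.mk_apply]
      rfl
    have h1 : (bg.toMatrix bf).det * (bf.toMatrix bg).det = 1 := by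
      rw [← Matrix.det_mul, Module.Basis.toMatrix_mul_toMatrix_flip, Matrix.det_one]
    rw [hMT, Matrix.det_transpose]
    exact left_ne_zero_of_mul_eq_one h1
  have hWf : polyWronskian f = Polynomial.C M.det * polyWronskian gE := by
    rw [show f = (fun i => ∑ j, M i j • gE j) from funext hf_eq]
    exact polyWronskian_transform M gE
  refine ⟨dseq, hmonod, by rw [← hDS, hrange], ?_, ?_⟩
  · rw [hWf]
    exact mul_ne_zero (Polynomial.C_ne_zero.2 hdetM) hWgE.1
  · rw [hWf, Polynomial.natDegree_C_mul hdetM, hWgE.2]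
    congr 1
    rw [show (∑ i : Fin (N + 1), (i : ℕ)) = ∑ i ∈ Finset.range (N + 1), i from
      Fin.sum_univ_eq_sum_range (fun k => k) (N + 1), Finset.sum_range_id,
      Nat.add_sub_cancel, Nat.mul_comm]
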